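/- Let G be a superoperator on ℂ^{2×2} and 0 ≤ ε ≤ 1 such that ‖G(ζ_a^±) − ζ_a^±‖₁ ≤ ε for all six states ζ_x^±, ζ_y^±, ζ_z^±. Then the superoperator norm of G − I is at most 8ε. -/

import Mathlib

open Matrix
open scoped ComplexOrder

/-- The outer product |ψ⟩⟨ψ|. -/
noncomputable def outer (ψ : Fin 2 → ℂ) : Matrix (Fin 2) (Fin 2) ℂ :=
  Matrix.vecMulVec ψ (star ψ)

noncomputable def zetaXp : Matrix (Fin 2) (Fin 2) ℂ := outer ![1 / Real.sqrt 2, 1 / Real.sqrt 2]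
noncomputable def zetaXm : Matrix (Fin 2) (Fin 2) ℂ := outer ![1 / Real.sqrt 2, -(1 / Real.sqrt 2)]
noncomputable def zetaYp : Matrix (Fin 2) (Fin 2) ℂ :=
  outer ![1 / Real.sqrt 2, (1 / Real.sqrt 2 : ℝ) * Complex.I]
noncomputable def zetaYm : Matrix (Fin 2) (Fin 2) ℂ :=
  outer ![1 / Real.sqrt 2, -((1 / Real.sqrt 2 : ℝ) * Complex.I)]
noncomputable def zetaZp : Matrix (Fin 2) (Fin 2) ℂ := outer ![1, 0]
noncomputable def zetaZm : Matrix (Fin 2) (Fin 2) ℂ := outer ![0, 1]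

/-- The trace norm ‖V‖₁ = Tr √(V†V). -/
noncomputable def traceNorm (V : Matrix (Fin 2) (Fin 2) ℂ) : ℝ :=
  (((Matrix.posSemidef_conjTranspose_mul_self V).1.eigenvectorUnitary.1 *
      diagonal (((↑) : ℝ → ℂ) ∘ (Real.sqrt ∘ (Matrix.posSemidef_conjTranspose_mul_self V).1.eigenvalues)) *
      (star (Matrix.posSemidef_conjTranspose_mul_self V).1.eigenvectorUnitary :
        Matrix (Fin 2) (Fin 2) ℂ)).trace).re

attribute [local instance] Matrix.frobeniusNormedAddCommGroup Matrix.frobeniusNormedSpace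

lemma frob_sq_eq (V : Matrix (Fin 2) (Fin 2) ℂ) : ‖V‖^2 = ∑ i, ∑ j, ‖V i j‖^2 := by
  rw [Matrix.frobenius_norm_def, ← Real.rpow_natCast _ 2, ← Real.rpow_mul (by positivity)]
  norm_num

lemma arith_aux (e n0 n1 n2 n3 : ℝ) (he : 0 ≤ e)
    (h0 : 0 ≤ n0) (h1 : 0 ≤ n1) (h2 : 0 ≤ n2) (h3 : 0 ≤ n3)
    (hs : n0 + n1 + n2 + n3 ≤ 2) :
    n0 * e + n3 * e + ((n1 + n2)/2) * (2 * e) + ((n1 + n2)/2) * (2 * e) ≤ 4 * e := by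
  nlinarith

lemma trace_norm_aux (V : Matrix (Fin 2) (Fin 2) ℂ) :
    ‖V‖ ≤ traceNorm V ∧ traceNorm V ≤ Real.sqrt 2 * ‖V‖ := by
  set S := ((Matrix.posSemidef_conjTranspose_mul_self V).1.eigenvectorUnitary.1 *
      diagonal (((↑) : ℝ → ℂ) ∘ (Real.sqrt ∘ (Matrix.posSemidef_conjTranspose_mul_self V).1.eigenvalues)) *
      (star (Matrix.posSemidef_conjTranspose_mul_self V).1.eigenvectorUnitary :
        Matrix (Fin 2) (Fin 2) ℂ)) with hSdef
  have hS : S.PosSemidef := by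
    have hd : (diagonal (((↑) : ℝ → ℂ) ∘ (Real.sqrt ∘
        (Matrix.posSemidef_conjTranspose_mul_self V).1.eigenvalues))).PosSemidef := by
      rw [Matrix.posSemidef_diagonal_iff]
      intro i
      simp [Real.sqrt_nonneg]
    have := hd.mul_mul_conjTranspose_same
      ((Matrix.posSemidef_conjTranspose_mul_self V).1.eigenvectorUnitary.1)
    simpa [hSdef, Matrix.star_eq_conjTranspose] using this
  have hSS : S * S = Vᴴ * V := by
    have hP := Matrix.posSemidef_conjTranspose_mul_self V
    have hU : (star (hP.1.eigenvectorUnitary : Matrix (Fin 2) (Fin 2) ℂ)) *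
        (hP.1.eigenvectorUnitary : Matrix (Fin 2) (Fin 2) ℂ) = 1 :=
      Unitary.coe_star_mul_self _
    have hdd : diagonal (((↑) : ℝ → ℂ) ∘ (Real.sqrt ∘ hP.1.eigenvalues)) *
        diagonal (((↑) : ℝ → ℂ) ∘ (Real.sqrt ∘ hP.1.eigenvalues)) =
        diagonal (RCLike.ofReal ∘ hP.1.eigenvalues) := by
      rw [Matrix.diagonal_mul_diagonal]
      congr 1
      funext i
      simp only [Function.comp_apply]
      rw [← Complex.ofReal_mul, Real.mul_self_sqrt (hP.eigenvalues_nonneg i)]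
      rfl
    conv_rhs => rw [hP.1.spectral_theorem, Unitary.conjStarAlgAut_apply]
    rw [hSdef]
    calc _ = (hP.1.eigenvectorUnitary : Matrix (Fin 2) (Fin 2) ℂ) *
          (diagonal (((↑) : ℝ → ℂ) ∘ (Real.sqrt ∘ hP.1.eigenvalues)) *
          ((star (hP.1.eigenvectorUnitary : Matrix (Fin 2) (Fin 2) ℂ)) *
          (hP.1.eigenvectorUnitary : Matrix (Fin 2) (Fin 2) ℂ)) *
          diagonal (((↑) : ℝ → ℂ) ∘ (Real.sqrt ∘ hP.1.eigenvalues))) *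
          (star (hP.1.eigenvectorUnitary : Matrix (Fin 2) (Fin 2) ℂ)) := by
            simp only [Matrix.mul_assoc]
      _ = _ := by rw [hU, Matrix.mul_one, hdd]
  have hH : Sᴴ = S := hS.1
  have h10 : S 1 0 = starRingEnd ℂ (S 0 1) := by
    conv_lhs => rw [← hH]
    rfl
  set a := (S 0 0).re with ha'
  set b := (S 1 1).re with hb'
  set c2 := Complex.normSq (S 0 1) with hc2'
  have hdiag : ∀ i, S i i = ((S i i).re : ℂ) := by
    intro i
    have h : starRingEnd ℂ (S i i) = S i i := by
      conv_rhs => rw [← hH]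
      simp [conjTranspose_apply]
    have him := Complex.conj_eq_iff_im.mp h
    exact (Complex.conj_eq_iff_re.mp h).symm ▸ (Complex.ext rfl (by simp [him])).symm
  have hS00 : S 0 0 = (a : ℂ) := hdiag 0
  have hS11 : S 1 1 = (b : ℂ) := hdiag 1
  have key : ∀ x : Fin 2 → ℂ, 0 ≤ (star x ⬝ᵥ S *ᵥ x).re := by
    intro x
    have := hS.dotProduct_mulVec_nonneg x
    rw [Complex.le_def] at this
    simpa using this.1
  have expand : ∀ x : Fin 2 → ℂ, star x ⬝ᵥ S *ᵥ x =
      (starRingEnd ℂ (x 0)) * (S 0 0 * x 0 + S 0 1 * x 1)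
    + (starRingEnd ℂ (x 1)) * (S 1 0 * x 0 + S 1 1 * x 1) := by
    intro x
    simp [dotProduct, mulVec, Fin.sum_univ_two, Complex.star_def]
  set u := (S 0 1).re with hu'
  set v := (S 0 1).im with hv'
  have hc2uv : c2 = u * u + v * v := by rw [hc2', Complex.normSq_apply]
  have ha : 0 ≤ a := by
    have := key ![1, 0]
    rw [expand] at this
    simpa [hS00] using this
  have hb : 0 ≤ b := by
    have := key ![0, 1]
    rw [expand] at this
    simpa [hS11] using this
  have hc2 : 0 ≤ c2 := Complex.normSq_nonneg _
  have h1 : 0 ≤ b^2 * a - b * c2 := by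
    have := key ![S 1 1, -(S 1 0)]
    rw [expand] at this
    simp only [Matrix.cons_val_zero, Matrix.cons_val_one, Matrix.head_cons, h10, hS00, hS11] at this
    simp only [Complex.add_re, Complex.mul_re, Complex.mul_im, Complex.add_im, Complex.neg_re,
      Complex.neg_im, Complex.conj_re, Complex.conj_im, Complex.ofReal_re, Complex.ofReal_im] at this
    rw [hc2uv]
    nlinarith [this]
  have h2 : 0 ≤ a^2 * b - a * c2 := by
    have := key ![-(S 0 1), S 0 0]
    rw [expand] at this
    simp only [Matrix.cons_val_zero, Matrix.cons_val_one, Matrix.head_cons, h10, hS00, hS11] at this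
    simp only [Complex.add_re, Complex.mul_re, Complex.mul_im, Complex.add_im, Complex.neg_re,
      Complex.neg_im, Complex.conj_re, Complex.conj_im, Complex.ofReal_re, Complex.ofReal_im] at this
    rw [hc2uv]
    nlinarith [this]
  have h3 : 0 ≤ a * c2 - 2 * c2 + b := by
    have := key ![-(S 0 1), 1]
    rw [expand] at this
    simp only [Matrix.cons_val_zero, Matrix.cons_val_one, Matrix.head_cons, h10, hS00, hS11] at this
    simp only [Complex.add_re, Complex.mul_re, Complex.mul_im, Complex.add_im, Complex.neg_re,
      Complex.neg_im, Complex.conj_re, Complex.conj_im, Complex.ofReal_re, Complex.ofReal_im,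
      Complex.one_re, Complex.one_im, _root_.map_one] at this
    rw [hc2uv]
    nlinarith [this]
  have hkey : c2 ≤ a * b := by
    rcases eq_or_lt_of_le ha with h | h
    · nlinarith
    · nlinarith
  have htn : traceNorm V = a + b := by
    unfold traceNorm
    rw [← hSdef, Matrix.trace_fin_two]
    simp [ha', hb']
  have hfrob : ‖V‖^2 = a^2 + b^2 + 2 * c2 := by
    have ht : ((Vᴴ * V).trace).re = a^2 + b^2 + 2 * c2 := by
      rw [← hSS, Matrix.trace_fin_two]
      simp only [Matrix.mul_apply, Fin.sum_univ_two, h10, hS00, hS11]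
      simp only [Complex.add_re, Complex.mul_re, Complex.mul_im, Complex.add_im,
        Complex.conj_re, Complex.conj_im, Complex.ofReal_re, Complex.ofReal_im]
      rw [hc2uv]
      ring
    rw [frob_sq_eq, ← ht, Matrix.trace_fin_two]
    simp only [Matrix.mul_apply, Fin.sum_univ_two, Matrix.conjTranspose_apply, Complex.star_def,
      Complex.add_re, Complex.mul_re, Complex.conj_re, Complex.conj_im]
    simp only [Complex.sq_norm, Complex.normSq_apply]
    ring
  constructor
  · nlinarith [norm_nonneg V]
  · have hsq : (a + b)^2 ≤ (Real.sqrt 2 * ‖V‖)^2 := by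
      rw [mul_pow, Real.sq_sqrt (by norm_num : (0:ℝ) ≤ 2), hfrob]
      nlinarith [sq_nonneg (a - b), hc2]
    rw [htn]
    nlinarith [hsq, Real.sqrt_nonneg 2, norm_nonneg V, mul_nonneg (Real.sqrt_nonneg 2) (norm_nonneg V)]


lemma hdec (V : Matrix (Fin 2) (Fin 2) ℂ) : V = V 0 0 • zetaZp + V 1 1 • zetaZm
      + ((V 0 1 + V 1 0)/2) • (zetaXp - zetaXm)
      + ((V 0 1 - V 1 0) * Complex.I / 2) • (zetaYp - zetaYm) := by
  have h2 : (Real.sqrt 2 : ℂ) * (Real.sqrt 2 : ℂ) = 2 := by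
    rw [← Complex.ofReal_mul, Real.mul_self_sqrt (by norm_num : (0:ℝ) ≤ 2)]
    norm_num
  have hp2 : (Real.sqrt 2 : ℂ)^2 = 2 := by rw [sq, h2]
  have hp4 : (Real.sqrt 2 : ℂ)^4 = 4 := by rw [show ((Real.sqrt 2:ℂ))^4 = ((Real.sqrt 2:ℂ)^2)^2 by ring, hp2]; norm_num
  have hp6 : (Real.sqrt 2 : ℂ)^6 = 8 := by rw [show ((Real.sqrt 2:ℂ))^6 = ((Real.sqrt 2:ℂ)^2)^3 by ring, hp2]; norm_num
  funext i j
  fin_cases i <;> fin_cases j <;>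
    simp only [zetaZp, zetaZm, zetaXp, zetaXm, zetaYp, zetaYm, outer, Matrix.vecMulVec_apply,
      Matrix.add_apply, Matrix.smul_apply, Matrix.sub_apply] <;>
    simp [zetaZp, zetaZm, zetaXp, zetaXm, zetaYp, zetaYm, outer, Matrix.vecMulVec_apply,
        Complex.conj_ofReal, Complex.conj_I, div_mul_div_comm] <;>
    field_simp <;> ring_nf <;> simp [Complex.I_sq, hp2, hp4, hp6] <;> ring_nf


theorem near_identity_on_six_states (ε : ℝ) (hε : 0 ≤ ε ∧ ε ≤ 1)
    (G : Matrix (Fin 2) (Fin 2) ℂ →ₗ[ℂ] Matrix (Fin 2) (Fin 2) ℂ)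
    (hx : traceNorm (G zetaXp - zetaXp) ≤ ε ∧ traceNorm (G zetaXm - zetaXm) ≤ ε)
    (hy : traceNorm (G zetaYp - zetaYp) ≤ ε ∧ traceNorm (G zetaYm - zetaYm) ≤ ε)
    (hz : traceNorm (G zetaZp - zetaZp) ≤ ε ∧ traceNorm (G zetaZm - zetaZm) ≤ ε) :
    ∀ V : Matrix (Fin 2) (Fin 2) ℂ, traceNorm V = 1 →
      traceNorm (G V - V) ≤ 8 * ε := by
  obtain ⟨hε0, -⟩ := hε
  intro V hV
  -- Frobenius-norm bounds on the six defect matrices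
  have hXp : ‖G zetaXp - zetaXp‖ ≤ ε := (trace_norm_aux _).1.trans hx.1
  have hXm : ‖G zetaXm - zetaXm‖ ≤ ε := (trace_norm_aux _).1.trans hx.2
  have hYp : ‖G zetaYp - zetaYp‖ ≤ ε := (trace_norm_aux _).1.trans hy.1
  have hYm : ‖G zetaYm - zetaYm‖ ≤ ε := (trace_norm_aux _).1.trans hy.2
  have hZp : ‖G zetaZp - zetaZp‖ ≤ ε := (trace_norm_aux _).1.trans hz.1
  have hZm : ‖G zetaZm - zetaZm‖ ≤ ε := (trace_norm_aux _).1.trans hz.2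
  have hVfrob : ‖V‖ ≤ 1 := (trace_norm_aux V).1.trans hV.le
  -- sum of entry norms bounded by 2‖V‖
  have hVsq : ‖V‖^2 = ‖V 0 0‖^2 + ‖V 0 1‖^2 + ‖V 1 0‖^2 + ‖V 1 1‖^2 := by
    rw [frob_sq_eq, Fin.sum_univ_two, Fin.sum_univ_two, Fin.sum_univ_two]
    ring
  have hsum : ‖V 0 0‖ + ‖V 0 1‖ + ‖V 1 0‖ + ‖V 1 1‖ ≤ 2 * ‖V‖ := by
    nlinarith [sq_nonneg (‖V 0 0‖ - ‖V 0 1‖), sq_nonneg (‖V 0 0‖ - ‖V 1 0‖),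
      sq_nonneg (‖V 0 0‖ - ‖V 1 1‖), sq_nonneg (‖V 0 1‖ - ‖V 1 0‖),
      sq_nonneg (‖V 0 1‖ - ‖V 1 1‖), sq_nonneg (‖V 1 0‖ - ‖V 1 1‖),
      norm_nonneg V, norm_nonneg (V 0 0), norm_nonneg (V 0 1), norm_nonneg (V 1 0),
      norm_nonneg (V 1 1)]
  -- decomposition of G V - V
  have hGdec : G V - V = V 0 0 • (G zetaZp - zetaZp) + V 1 1 • (G zetaZm - zetaZm)
      + ((V 0 1 + V 1 0)/2) • ((G zetaXp - zetaXp) - (G zetaXm - zetaXm))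
      + ((V 0 1 - V 1 0) * Complex.I / 2) • ((G zetaYp - zetaYp) - (G zetaYm - zetaYm)) := by
    conv_lhs => rw [hdec V]
    simp only [_root_.map_add, _root_.map_smul, map_sub, smul_sub]
    abel
  have hDX : ‖(G zetaXp - zetaXp) - (G zetaXm - zetaXm)‖ ≤ 2 * ε := by
    have := norm_sub_le (G zetaXp - zetaXp) (G zetaXm - zetaXm)
    linarith
  have hDY : ‖(G zetaYp - zetaYp) - (G zetaYm - zetaYm)‖ ≤ 2 * ε := by
    have := norm_sub_le (G zetaYp - zetaYp) (G zetaYm - zetaYm)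
    linarith
  have hc3 : ‖(V 0 1 + V 1 0)/2‖ ≤ (‖V 0 1‖ + ‖V 1 0‖)/2 := by
    rw [norm_div]
    have := norm_add_le (V 0 1) (V 1 0)
    simp only [Complex.norm_ofNat]
    linarith
  have hc4 : ‖(V 0 1 - V 1 0) * Complex.I / 2‖ ≤ (‖V 0 1‖ + ‖V 1 0‖)/2 := by
    rw [norm_div, norm_mul, Complex.norm_I, mul_one]
    have := norm_sub_le (V 0 1) (V 1 0)
    simp only [Complex.norm_ofNat]
    linarith
  have hnorm : ‖G V - V‖ ≤ 4 * ε := by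
    rw [hGdec]
    have t4 : ∀ A B C D : Matrix (Fin 2) (Fin 2) ℂ, ‖A + B + C + D‖ ≤ ‖A‖ + ‖B‖ + ‖C‖ + ‖D‖ := by
      intro A B C D
      have h1 := norm_add_le (A + B + C) D
      have h2 := norm_add_le (A + B) C
      have h3 := norm_add_le A B
      linarith
    refine le_trans (t4 _ _ _ _) ?_
    rw [norm_smul, norm_smul, norm_smul, norm_smul]
    have b1 : ‖V 0 0‖ * ‖G zetaZp - zetaZp‖ ≤ ‖V 0 0‖ * ε :=
      mul_le_mul_of_nonneg_left hZp (norm_nonneg _)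
    have b2 : ‖V 1 1‖ * ‖G zetaZm - zetaZm‖ ≤ ‖V 1 1‖ * ε :=
      mul_le_mul_of_nonneg_left hZm (norm_nonneg _)
    have b3 : ‖(V 0 1 + V 1 0)/2‖ * ‖(G zetaXp - zetaXp) - (G zetaXm - zetaXm)‖
        ≤ ((‖V 0 1‖ + ‖V 1 0‖)/2) * (2 * ε) :=
      mul_le_mul hc3 hDX (norm_nonneg _) (by positivity)
    have b4 : ‖(V 0 1 - V 1 0) * Complex.I / 2‖ * ‖(G zetaYp - zetaYp) - (G zetaYm - zetaYm)‖
        ≤ ((‖V 0 1‖ + ‖V 1 0‖)/2) * (2 * ε) :=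
      mul_le_mul hc4 hDY (norm_nonneg _) (by positivity)
    have hs' : ‖V 0 0‖ + ‖V 0 1‖ + ‖V 1 0‖ + ‖V 1 1‖ ≤ 2 := by linarith
    have hs2 := arith_aux ε (‖V 0 0‖) (‖V 0 1‖) (‖V 1 0‖) (‖V 1 1‖) hε0
      (norm_nonneg _) (norm_nonneg _) (norm_nonneg _) (norm_nonneg _) hs'
    have htot := add_le_add (add_le_add (add_le_add b1 b2) b3) b4
    exact htot.trans hs2
  have hs2le : Real.sqrt 2 ≤ 2 := by
    nlinarith [Real.sq_sqrt (by norm_num : (0:ℝ) ≤ 2), Real.sqrt_nonneg 2]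
  have ht2 := (trace_norm_aux (G V - V)).2
  have hm1 : Real.sqrt 2 * ‖G V - V‖ ≤ 2 * ‖G V - V‖ :=
    mul_le_mul_of_nonneg_right hs2le (norm_nonneg _)
  have hm2 : (2:ℝ) * ‖G V - V‖ ≤ 2 * (4 * ε) := by linarith
  linarith
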